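/- arXiv:1809.01283 — 2 statements merged into one kernel-verified Lean document; each statement's English description precedes it below -/
import Mathlib

section
/- Let c(x,y) = a·(1 + ρ·((h_x·x + h_y·y)/d)^σ) with a, ρ, d > 0, h_x, h_y > 0, natural σ ≥ 1, and max(h_x/h_y, h_y/h_x) ≤ k. Then for all x,y,v,w ≥ 0 with x+y = v+w, c(x,y) ≤ k^σ · c(v,w). -/
theorem swap_cost_bound (a ρ d hx hy k : ℝ) (σ : ℕ) (ha : 0 < a) (hρ : 0 < ρ) (hd : 0 < d)
    (hhx : 0 < hx) (hhy : 0 < hy) (hσ : 1 ≤ σ) (hk : max (hx / hy) (hy / hx) ≤ k)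
    (c : ℝ → ℝ → ℝ) (hc : ∀ x y, c x y = a * (1 + ρ * ((hx * x + hy * y) / d) ^ σ)) :
    ∀ x y v w : ℝ, 0 ≤ x → 0 ≤ y → 0 ≤ v → 0 ≤ w → x + y = v + w →
      c x y ≤ k ^ σ * c v w := by
  intro x y v w hx0 hy0 hv0 hw0 hsum
  have hk1 : 1 ≤ k := by
    rcases le_total hx hy with h | h
    · calc 1 ≤ hy / hx := (one_le_div hhx).2 h
        _ ≤ k := le_trans (le_max_right _ _) hk
    · calc 1 ≤ hx / hy := (one_le_div hhy).2 h
        _ ≤ k := le_trans (le_max_left _ _) hk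
  have hxk : hx ≤ k * hy := by
    have : hx / hy ≤ k := le_trans (le_max_left _ _) hk
    calc hx = (hx / hy) * hy := by field_simp
      _ ≤ k * hy := by nlinarith
  have hyk : hy ≤ k * hx := by
    have : hy / hx ≤ k := le_trans (le_max_right _ _) hk
    calc hy = (hy / hx) * hx := by field_simp
      _ ≤ k * hx := by nlinarith
  have hkey : hx * x + hy * y ≤ k * (hx * v + hy * w) := by
    rcases le_total hx hy with h | h
    · nlinarith [mul_le_mul_of_nonneg_right hyk hv0, mul_le_mul_of_nonneg_right h hx0,
        mul_nonneg (mul_nonneg (sub_nonneg.2 hk1) hhy.le) hw0]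
    · nlinarith [mul_le_mul_of_nonneg_right hxk hw0, mul_le_mul_of_nonneg_right h hy0,
        mul_nonneg (mul_nonneg (sub_nonneg.2 hk1) hhx.le) hv0]
  have hAnn : 0 ≤ (hx * x + hy * y) / d := by positivity
  have hBnn : 0 ≤ (hx * v + hy * w) / d := by positivity
  have hpow : ((hx * x + hy * y) / d) ^ σ ≤ k ^ σ * ((hx * v + hy * w) / d) ^ σ := by
    rw [← mul_pow]
    apply pow_le_pow_left₀ hAnn
    rw [div_le_iff₀ hd] at *
    calc (hx * x + hy * y) ≤ k * (hx * v + hy * w) := hkey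
      _ = k * ((hx * v + hy * w) / d) * d := by field_simp
  have hk1' : 1 ≤ k ^ σ := one_le_pow₀ hk1
  rw [hc, hc]
  have hB : 0 ≤ ((hx * v + hy * w) / d) ^ σ := pow_nonneg hBnn σ
  nlinarith [mul_le_mul_of_nonneg_left hpow hρ.le]
end

section
/- For a polynomial separable cost c(f) = a·(1 + ρ·(f/d)^σ) with a, ρ, d > 0 and natural σ ≥ 1, for all f, q ≥ 0 with q > 0: (c(q) − c(f))·f ≤ ξ(σ)·c(q)·q, where ξ(σ) = σ·(σ+1)^(-(σ+1)/σ). -/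
noncomputable def xi (σ : ℝ) : ℝ := σ * (σ + 1) ^ (-(σ + 1) / σ)

open Real

lemma key_rpow (s : ℝ) (hs : 1 ≤ s) (x y : ℝ) (hx : 0 ≤ x) (hy : 0 ≤ y) :
    x * y ^ s ≤ x ^ (s + 1) + xi s * y ^ (s + 1) := by
  have hs0 : 0 < s := lt_of_lt_of_le one_pos hs
  have hs1 : (0:ℝ) < s + 1 := by linarith
  have hpq : (s + 1).HolderConjugate ((s + 1) / s) := by
    rw [Real.holderConjugate_iff]
    constructor
    · linarith
    · field_simp
      ring
  set μ : ℝ := (s + 1) ^ ((s + 1)⁻¹) with hμ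
  have hμpos : 0 < μ := rpow_pos_of_pos hs1 _
  have hys : 0 ≤ y ^ s := rpow_nonneg hy s
  have hY := Real.young_inequality_of_nonneg
    (mul_nonneg hμpos.le hx) (div_nonneg hys hμpos.le) hpq
  -- identify the pieces
  have hμp : μ ^ (s + 1) = s + 1 := by
    rw [hμ, ← Real.rpow_mul hs1.le, inv_mul_cancel₀ hs1.ne', rpow_one]
  have h1 : (μ * x) ^ (s + 1) / (s + 1) = x ^ (s + 1) := by
    rw [mul_rpow hμpos.le hx, hμp]
    field_simp
  have h2 : (y ^ s / μ) ^ ((s + 1) / s) / ((s + 1) / s) = xi s * y ^ (s + 1) := by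
    rw [div_rpow hys hμpos.le]
    rw [← Real.rpow_mul hy, hμ, ← Real.rpow_mul hs1.le]
    have e1 : s * ((s + 1) / s) = s + 1 := by field_simp
    have e2 : (s + 1)⁻¹ * ((s + 1) / s) = 1 / s := by field_simp
    rw [e1, e2, xi]
    rw [show -(s + 1) / s = -(1/s) + (-1) by field_simp; ring]
    rw [Real.rpow_add hs1, Real.rpow_neg_one, Real.rpow_neg hs1.le]
    field_simp
  calc x * y ^ s = (μ * x) * (y ^ s / μ) := by field_simp
    _ ≤ (μ * x) ^ (s + 1) / (s + 1) + (y ^ s / μ) ^ ((s + 1) / s) / ((s + 1) / s) := hY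
    _ = x ^ (s + 1) + xi s * y ^ (s + 1) := by rw [h1, h2]

lemma key_nat (σ : ℕ) (hσ : 1 ≤ σ) (x y : ℝ) (hx : 0 ≤ x) (hy : 0 ≤ y) :
    x * y ^ σ ≤ x ^ (σ + 1) + xi σ * y ^ (σ + 1) := by
  have hs : (1:ℝ) ≤ (σ:ℝ) := by exact_mod_cast hσ
  have := key_rpow (σ:ℝ) hs x y hx hy
  rw [show ((σ:ℝ) + 1) = ((σ + 1 : ℕ) : ℝ) by push_cast; ring] at this
  rw [rpow_natCast, rpow_natCast, rpow_natCast] at this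
  exact this

lemma xi_nonneg (σ : ℕ) (hσ : 1 ≤ σ) : 0 ≤ xi σ := by
  have hs : (0:ℝ) < (σ:ℝ) := by exact_mod_cast hσ
  exact mul_nonneg hs.le (rpow_nonneg (by linarith) _)

theorem poly_beta_bound (a ρ d : ℝ) (σ : ℕ) (ha : 0 < a) (hρ : 0 < ρ) (hd : 0 < d)
    (hσ : 1 ≤ σ) (c : ℝ → ℝ) (hc : ∀ f, c f = a * (1 + ρ * (f / d) ^ σ)) :
    ∀ f q : ℝ, 0 ≤ f → 0 ≤ q → 0 < q →
      (c q - c f) * f ≤ xi σ * (c q * q) := by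
  intro f q hf hq hq'
  rw [hc, hc]
  set X := f / d with hX
  set Y := q / d with hY
  have hX0 : 0 ≤ X := div_nonneg hf hd.le
  have hY0 : 0 ≤ Y := div_nonneg hq hd.le
  have hkey := key_nat σ hσ X Y hX0 hY0
  have hxi := xi_nonneg σ hσ
  have hfX : f = d * X := by rw [hX]; field_simp
  have hqY : q = d * Y := by rw [hY]; field_simp
  rw [hfX, hqY]
  have hXs : 0 ≤ X ^ σ := pow_nonneg hX0 σ
  have hYs : 0 ≤ Y ^ σ := pow_nonneg hY0 σ
  have hqpos : 0 < d * Y := by rw [← hqY]; exact hq'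
  have hY0' : 0 ≤ xi σ * (d * Y) := mul_nonneg hxi hqpos.le
  rw [pow_succ, pow_succ] at hkey
  nlinarith [mul_pos ha hρ, mul_pos (mul_pos ha hρ) hd, mul_nonneg hxi (mul_nonneg ha.le hqpos.le)]
end
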